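/- Suppose a ∈ A ⊆ ℝⁿ, C ∈ ℝ, f : ℝⁿ → 𝒫(ℝⁿ) is a multivalued map such that f(b) is a singleton for each b ∈ A, the restriction f|A is differentiable at a, the Lebesgue density of ℝⁿ \ A at a is 0, and |f(b) − y| ≤ C |b − c| whenever b ∈ A, c ∈ ℝⁿ, y ∈ f(c). Then f is strongly differentiable at a: there is a unique linear map L with the property that for every ε > 0 there is δ > 0 such that |y − f(a) − L(x − a)| ≤ ε |x − a| whenever |x − a| ≤ δ and y ∈ f(x). -/

import Mathlib

open Set Filter Metric MeasureTheory Topology ENNReal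

noncomputable section

abbrev Euc (n : ℕ) := EuclideanSpace ℝ (Fin n)

def IsNorm {n : ℕ} (φ : Euc n → ℝ) : Prop :=
  (∀ x, φ x = 0 ↔ x = 0) ∧ (∀ (c : ℝ) (x : Euc n), φ (c • x) = |c| * φ x) ∧
    (∀ x y, φ (x + y) ≤ φ x + φ y)

def StrictlyConvexNorm {n : ℕ} (φ : Euc n → ℝ) : Prop :=
  IsNorm φ ∧ ∀ a b, φ (a + b) = φ a + φ b → φ b • a = φ a • b

def UniformlyConvexNorm {n : ℕ} (φ : Euc n → ℝ) : Prop :=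
  IsNorm φ ∧ ∃ γ : ℝ, 0 < γ ∧ ConvexOn ℝ Set.univ (fun x => φ x - γ * ‖x‖)

def distφ {n : ℕ} (φ : Euc n → ℝ) (K : Set (Euc n)) (x : Euc n) : ℝ :=
  sInf {r | ∃ y ∈ K, r = φ (x - y)}

def nearφ {n : ℕ} (φ : Euc n → ℝ) (K : Set (Euc n)) (x : Euc n) : Set (Euc n) :=
  {a ∈ K | φ (x - a) = distφ φ K x}

def rhoφ {n : ℕ} (φ : Euc n → ℝ) (K : Set (Euc n)) (x : Euc n) : ℝ≥0∞ :=
  sSup {r : ℝ≥0∞ | ∃ s : ℝ, ∃ a ∈ nearφ φ K x,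
    r = ENNReal.ofReal s ∧ distφ φ K (a + s • (x - a)) = s * distφ φ K x}

def normalBundle {n : ℕ} (φ : Euc n → ℝ) (K : Set (Euc n)) : Set (Euc n × Euc n) :=
  {p | p.1 ∈ K ∧ φ p.2 = 1 ∧ ∃ s : ℝ, 0 < s ∧ distφ φ K (p.1 + s • p.2) = s}

def reachφ {n : ℕ} (φ : Euc n → ℝ) (K : Set (Euc n)) (p : Euc n × Euc n) : ℝ≥0∞ :=
  sSup {r : ℝ≥0∞ | ∃ s : ℝ, 0 < s ∧ r = ENNReal.ofReal s ∧ distφ φ K (p.1 + s • p.2) = s}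

def cutLocus {n : ℕ} (φ : Euc n → ℝ) (K : Set (Euc n)) : Set (Euc n) :=
  {x | ∃ p ∈ normalBundle φ K, reachφ φ K p ≠ ⊤ ∧
    x = p.1 + (reachφ φ K p).toReal • p.2}

def PtTwiceDiffAt {n : ℕ} (f : Euc n → ℝ) (x : Euc n) : Prop :=
  ∃ (L : Euc n →L[ℝ] ℝ) (Q : Euc n →L[ℝ] Euc n →L[ℝ] ℝ),
    Tendsto (fun y => |f y - f x - L (y - x) - Q (y - x) (y - x)| / ‖y - x‖ ^ 2)
      (𝓝[≠] x) (𝓝 0)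

lemma coefAux9 {N t e : ℝ} (hN : 0 ≤ N) (he : 0 < e) (ht : 0 < t) (ht2 : t ≤ 1/2)
    (h : t * (2*(N+1)) ≤ e) : 2*(e/8)*(1+t) + N*t ≤ e := by
  nlinarith [mul_le_mul_of_nonneg_left ht2 he.le]

theorem stmt9 {n : ℕ} (A : Set (Euc n)) (a : Euc n) (ha : a ∈ A) (C : ℝ)
    (f : Euc n → Set (Euc n)) (fa : Euc n) (hfa : f a = {fa})
    (hsing : ∀ b ∈ A, ∃ y, f b = {y})
    (hdens : Tendsto (fun r : ℝ => volume (Metric.ball a r \ A) / volume (Metric.ball a r))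
      (𝓝[>] 0) (𝓝 0))
    (hdiff : ∃ L : Euc n →L[ℝ] Euc n, ∀ ε > (0 : ℝ), ∃ δ > (0 : ℝ), ∀ x ∈ A,
      ‖x - a‖ ≤ δ → ∀ y ∈ f x, ‖y - fa - L (x - a)‖ ≤ ε * ‖x - a‖)
    (hlip : ∀ b ∈ A, ∀ z ∈ f b, ∀ c : Euc n, ∀ y ∈ f c, ‖z - y‖ ≤ C * ‖b - c‖) :
    ∃! L : Euc n →L[ℝ] Euc n, ∀ ε > (0 : ℝ), ∃ δ > (0 : ℝ), ∀ x : Euc n,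
      ‖x - a‖ ≤ δ → ∀ y ∈ f x, ‖y - fa - L (x - a)‖ ≤ ε * ‖x - a‖ := by
  obtain ⟨L, hL⟩ := hdiff
  have key : ∀ θ : ℝ, 0 < θ → ∃ r₀ > (0:ℝ), ∀ (c : Euc n) (r : ℝ), 0 < r → r ≤ r₀ →
      ‖c - a‖ ≤ r → (A ∩ Metric.ball c (θ * r)).Nonempty := by
    intro θ hθ
    have hθ1 : (0:ℝ) < 1 + θ := by linarith
    set k : ℝ≥0∞ := ENNReal.ofReal ((θ / (1 + θ)) ^ n) with hk
    have hkpos : 0 < k := ENNReal.ofReal_pos.2 (pow_pos (div_pos hθ hθ1) n)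
    have hev : ∀ᶠ R in 𝓝[>] (0:ℝ),
        volume (Metric.ball a R \ A) / volume (Metric.ball a R) < k :=
      hdens.eventually (gt_mem_nhds hkpos)
    rw [eventually_nhdsWithin_iff, Metric.eventually_nhds_iff] at hev
    obtain ⟨R₀, hR₀, hball⟩ := hev
    refine ⟨R₀ / (2 * (1 + θ)), by positivity, ?_⟩
    intro c r hr hrr hca
    by_contra hemp
    rw [Set.not_nonempty_iff_eq_empty] at hemp
    have hsub : Metric.ball c (θ * r) ⊆ Metric.ball a ((1 + θ) * r) \ A := by
      intro y hy
      have hyc : ‖y - c‖ < θ * r := by rw [← dist_eq_norm]; exact hy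
      constructor
      · rw [Metric.mem_ball, dist_eq_norm]
        calc ‖y - a‖ ≤ ‖y - c‖ + ‖c - a‖ := norm_sub_le_norm_sub_add_norm_sub y c a
          _ < θ * r + r := by linarith
          _ = (1 + θ) * r := by ring
      · intro hyA
        have : y ∈ A ∩ Metric.ball c (θ * r) := ⟨hyA, hy⟩
        rw [hemp] at this
        exact this
    set R := (1 + θ) * r with hR
    have hRpos : 0 < R := by positivity
    have hRlt : dist R 0 < R₀ := by
      rw [Real.dist_eq, sub_zero, abs_of_pos hRpos]
      have : r ≤ R₀ / (2 * (1 + θ)) := hrr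
      calc R = (1 + θ) * r := rfl
        _ ≤ (1 + θ) * (R₀ / (2 * (1 + θ))) := by
          exact mul_le_mul_of_nonneg_left this hθ1.le
        _ = R₀ / 2 := by field_simp
        _ < R₀ := by linarith
    have hlt := hball hRlt hRpos
    have hb0 : volume (Metric.ball a R) ≠ 0 := (measure_ball_pos volume a hRpos).ne'
    have hbt : volume (Metric.ball a R) ≠ ⊤ := measure_ball_lt_top.ne
    rw [ENNReal.div_lt_iff (Or.inl hb0) (Or.inl hbt)] at hlt
    have hvolR : volume (Metric.ball a R) =
        ENNReal.ofReal (R ^ n) * volume (Metric.ball (0 : Euc n) 1) := by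
      simpa [finrank_euclideanSpace_fin] using
        MeasureTheory.Measure.addHaar_ball_of_pos volume a hRpos
    have hvolc : volume (Metric.ball c (θ * r)) =
        ENNReal.ofReal ((θ * r) ^ n) * volume (Metric.ball (0 : Euc n) 1) := by
      simpa [finrank_euclideanSpace_fin] using
        MeasureTheory.Measure.addHaar_ball_of_pos volume c (by positivity : (0:ℝ) < θ * r)
    have heq : k * volume (Metric.ball a R) = volume (Metric.ball c (θ * r)) := by
      rw [hvolR, hvolc, ← mul_assoc, hk, ← ENNReal.ofReal_mul (by positivity)]
      congr 2
      rw [← mul_pow]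
      congr 1
      field_simp
      ring
    have := lt_of_le_of_lt (measure_mono hsub) hlt
    rw [heq] at this
    exact absurd this (lt_irrefl _)
  -- main existence statement for L
  have hmain : ∀ ε > (0 : ℝ), ∃ δ > (0 : ℝ), ∀ x : Euc n,
      ‖x - a‖ ≤ δ → ∀ y ∈ f x, ‖y - fa - L (x - a)‖ ≤ ε * ‖x - a‖ := by
    intro ε hε
    set M := |C| + ‖L‖ + 1 with hM
    have hM0 : 0 < M := by positivity
    set θ := min (1/2 : ℝ) (ε / (2 * M)) with hθdef
    have hθ0 : 0 < θ := lt_min (by norm_num) (by positivity)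
    have hθ2 : θ ≤ 1/2 := min_le_left _ _
    have hθM : θ ≤ ε / (2 * M) := min_le_right _ _
    obtain ⟨r₀, hr₀, hkey⟩ := key θ hθ0
    obtain ⟨δ', hδ', hd⟩ := hL (ε/4) (by positivity)
    refine ⟨min r₀ (δ'/2), lt_min hr₀ (by positivity), ?_⟩
    intro x hx y hy
    rcases eq_or_ne x a with rfl | hxa
    · rw [hfa] at hy
      simp only [Set.mem_singleton_iff] at hy
      subst hy
      simp
    · have hr : 0 < ‖x - a‖ := by rwa [norm_pos_iff, sub_ne_zero]
      obtain ⟨b, hbA, hbball⟩ := hkey x ‖x - a‖ hr (le_trans hx (min_le_left _ _)) le_rfl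
      have hbx : ‖b - x‖ ≤ θ * ‖x - a‖ := by
        rw [← dist_eq_norm]; exact (mem_ball.mp hbball).le
      have hba : ‖b - a‖ ≤ (1 + θ) * ‖x - a‖ := by
        calc ‖b - a‖ ≤ ‖b - x‖ + ‖x - a‖ := norm_sub_le_norm_sub_add_norm_sub b x a
          _ ≤ θ * ‖x - a‖ + 1 * ‖x - a‖ := by rw [one_mul]; exact add_le_add hbx le_rfl
          _ = (1 + θ) * ‖x - a‖ := by ring
      have hbaδ : ‖b - a‖ ≤ δ' := by
        have h1 : ‖x - a‖ ≤ δ'/2 := le_trans hx (min_le_right _ _)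
        have h2 : (1 + θ) * ‖x - a‖ ≤ 2 * (δ'/2) :=
          mul_le_mul (by linarith) h1 hr.le (by norm_num)
        linarith
      obtain ⟨z, hz⟩ := hsing b hbA
      have hzmem : z ∈ f b := by rw [hz]; rfl
      have hzd := hd b hbA hbaδ z hzmem
      have hzy := hlip b hbA z hzmem x y hy
      have h1 : ‖y - z‖ ≤ |C| * (θ * ‖x - a‖) := by
        rw [norm_sub_rev]
        calc ‖z - y‖ ≤ C * ‖b - x‖ := hzy
          _ ≤ |C| * ‖b - x‖ := mul_le_mul_of_nonneg_right (le_abs_self C) (norm_nonneg _)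
          _ ≤ |C| * (θ * ‖x - a‖) := mul_le_mul_of_nonneg_left hbx (abs_nonneg C)
      have h2 : ‖L (b - a) - L (x - a)‖ ≤ ‖L‖ * (θ * ‖x - a‖) := by
        rw [← map_sub]
        have heq : (b - a) - (x - a) = b - x := by abel
        rw [heq]
        calc ‖L (b - x)‖ ≤ ‖L‖ * ‖b - x‖ := L.le_opNorm _
          _ ≤ ‖L‖ * (θ * ‖x - a‖) := mul_le_mul_of_nonneg_left hbx (norm_nonneg _)
      have h3 : ‖z - fa - L (b - a)‖ ≤ (ε/4) * ((1 + θ) * ‖x - a‖) :=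
        le_trans hzd (mul_le_mul_of_nonneg_left hba (by positivity))
      have hsplit : y - fa - L (x - a) =
          (y - z) + (z - fa - L (b - a)) + (L (b - a) - L (x - a)) := by abel
      have hcoef : |C| * θ + (ε/4) * (1 + θ) + ‖L‖ * θ ≤ ε := by
        have hθM' : θ * (2 * M) ≤ ε := by
          rw [← le_div_iff₀ (by positivity)]; exact hθM
        nlinarith [abs_nonneg C, norm_nonneg L, hε.le, hθ0.le]
      calc ‖y - fa - L (x - a)‖
          ≤ ‖y - z‖ + ‖z - fa - L (b - a)‖ + ‖L (b - a) - L (x - a)‖ := by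
            rw [hsplit]; exact norm_add₃_le
        _ ≤ |C| * (θ * ‖x - a‖) + (ε/4) * ((1 + θ) * ‖x - a‖) + ‖L‖ * (θ * ‖x - a‖) :=
            add_le_add (add_le_add h1 h3) h2
        _ = (|C| * θ + (ε/4) * (1 + θ) + ‖L‖ * θ) * ‖x - a‖ := by ring
        _ ≤ ε * ‖x - a‖ := mul_le_mul_of_nonneg_right hcoef (norm_nonneg _)
  refine ⟨L, hmain, ?_⟩
  intro L' hL'
  have hunit : ∀ u : Euc n, ‖u‖ = 1 → ∀ ε > (0:ℝ), ‖L' u - L u‖ ≤ ε := by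
    intro u hu ε hε
    set D := L' - L with hD
    have hDu : L' u - L u = D u := by simp [hD]
    rw [hDu]
    set θ := min (1/2 : ℝ) (ε / (2 * (‖D‖ + 1))) with hθdef
    have hθ0 : 0 < θ := lt_min (by norm_num) (by positivity)
    have hθ2 : θ ≤ 1/2 := min_le_left _ _
    have hθM : θ ≤ ε / (2 * (‖D‖ + 1)) := min_le_right _ _
    obtain ⟨r₀, hr₀, hkey⟩ := key θ hθ0
    obtain ⟨δ₁, hδ₁, h1⟩ := hmain (ε/8) (by positivity)
    obtain ⟨δ₂, hδ₂, h2⟩ := hL' (ε/8) (by positivity)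
    set r := min r₀ (min δ₁ δ₂ / 2) with hrdef
    have hrpos : 0 < r := lt_min hr₀ (by positivity)
    set c := a + r • u with hc
    have hca : ‖c - a‖ = r := by
      rw [hc]
      simp [norm_smul, hu, abs_of_pos hrpos]
    obtain ⟨b, hbA, hbball⟩ := hkey c r hrpos (min_le_left _ _) hca.le
    have hbc : ‖b - c‖ ≤ θ * r := by
      rw [← dist_eq_norm]; exact (mem_ball.mp hbball).le
    have hba : ‖b - a‖ ≤ (1 + θ) * r := by
      calc ‖b - a‖ ≤ ‖b - c‖ + ‖c - a‖ := norm_sub_le_norm_sub_add_norm_sub b c a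
        _ ≤ θ * r + r := by rw [hca]; exact add_le_add hbc le_rfl
        _ = (1 + θ) * r := by ring
    have hbaδ : ‖b - a‖ ≤ min δ₁ δ₂ := by
      have hrd : r ≤ min δ₁ δ₂ / 2 := min_le_right _ _
      have : (1 + θ) * r ≤ 2 * (min δ₁ δ₂ / 2) :=
        mul_le_mul (by linarith) hrd hrpos.le (by norm_num)
      linarith
    obtain ⟨z, hz⟩ := hsing b hbA
    have hzmem : z ∈ f b := by rw [hz]; rfl
    have e1 := h1 b (le_trans hbaδ (min_le_left _ _)) z hzmem
    have e2 := h2 b (le_trans hbaδ (min_le_right _ _)) z hzmem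
    have hDba : ‖D (b - a)‖ ≤ 2 * (ε/8) * ((1 + θ) * r) := by
      have hsplit : D (b - a) = (z - fa - L (b - a)) - (z - fa - L' (b - a)) := by
        simp only [hD, ContinuousLinearMap.sub_apply]; abel
      rw [hsplit]
      calc ‖(z - fa - L (b - a)) - (z - fa - L' (b - a))‖
          ≤ ‖z - fa - L (b - a)‖ + ‖z - fa - L' (b - a)‖ := norm_sub_le _ _
        _ ≤ (ε/8) * ‖b - a‖ + (ε/8) * ‖b - a‖ := add_le_add e1 e2
        _ = 2 * (ε/8) * ‖b - a‖ := by ring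
        _ ≤ 2 * (ε/8) * ((1 + θ) * r) := mul_le_mul_of_nonneg_left hba (by positivity)
    have hDcb : ‖D (c - b)‖ ≤ ‖D‖ * (θ * r) := by
      calc ‖D (c - b)‖ ≤ ‖D‖ * ‖c - b‖ := D.le_opNorm _
        _ = ‖D‖ * ‖b - c‖ := by rw [norm_sub_rev c b]
        _ ≤ ‖D‖ * (θ * r) := mul_le_mul_of_nonneg_left hbc (norm_nonneg _)
    have hru : ‖D (r • u)‖ ≤ 2 * (ε/8) * ((1 + θ) * r) + ‖D‖ * (θ * r) := by
      have hsplit : D (r • u) = D (b - a) + D (c - b) := by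
        rw [← map_add]
        congr 1
        rw [hc]; abel
      rw [hsplit]
      exact le_trans (norm_add_le _ _) (add_le_add hDba hDcb)
    have hnorm : ‖D (r • u)‖ = r * ‖D u‖ := by
      rw [D.map_smul, norm_smul, Real.norm_eq_abs, abs_of_pos hrpos]
    rw [hnorm] at hru
    have hcoef : 2 * (ε/8) * (1 + θ) + ‖D‖ * θ ≤ ε := by
      have hθM' : θ * (2 * (‖D‖ + 1)) ≤ ε := by
        rw [← le_div_iff₀ (by positivity)]; exact hθM
      exact coefAux9 (norm_nonneg D) hε hθ0 hθ2 hθM'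
    have : r * ‖D u‖ ≤ (2 * (ε/8) * (1 + θ) + ‖D‖ * θ) * r := by
      calc r * ‖D u‖ ≤ 2 * (ε/8) * ((1 + θ) * r) + ‖D‖ * (θ * r) := hru
        _ = (2 * (ε/8) * (1 + θ) + ‖D‖ * θ) * r := by ring
    have hfin : r * ‖D u‖ ≤ ε * r :=
      le_trans this (mul_le_mul_of_nonneg_right hcoef hrpos.le)
    rw [mul_comm ε r] at hfin
    exact le_of_mul_le_mul_left (by rwa [] at hfin) hrpos
  have hext : ∀ v : Euc n, L' v = L v := by
    intro v
    rcases eq_or_ne v 0 with rfl | hv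
    · simp
    · have hu : ‖‖v‖⁻¹ • v‖ = 1 := norm_smul_inv_norm hv
      have h0 : ‖L' (‖v‖⁻¹ • v) - L (‖v‖⁻¹ • v)‖ ≤ 0 := by
        refine le_of_forall_pos_le_add ?_
        intro ε hε
        simpa using hunit _ hu ε hε
      have heq : L' (‖v‖⁻¹ • v) = L (‖v‖⁻¹ • v) := by
        rwa [norm_le_zero_iff, sub_eq_zero] at h0
      have hvv : ‖v‖ • (‖v‖⁻¹ • v) = v := by
        rw [smul_smul, mul_inv_cancel₀ (norm_ne_zero_iff.mpr hv), one_smul]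
      calc L' v = L' (‖v‖ • (‖v‖⁻¹ • v)) := by rw [hvv]
        _ = ‖v‖ • L' (‖v‖⁻¹ • v) := L'.map_smul _ _
        _ = ‖v‖ • L (‖v‖⁻¹ • v) := by rw [heq]
        _ = L (‖v‖ • (‖v‖⁻¹ • v)) := (L.map_smul _ _).symm
        _ = L v := by rw [hvv]
  exact ContinuousLinearMap.ext hext
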